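/- For nonnegative integers n and a complex number a (with no zero denominators), the terminating hypergeometric sum ∑_{k=0}^n [(-n)_k (a)_k (3a+n)_k / (k! (3a/2)_k ((1+3a)/2)_k)] (3/4)^k equals (1/3)_{n/3} (2/3)_{n/3} / ((1/3+a)_{n/3} (2/3+a)_{n/3}) when 3 divides n, and equals 0 otherwise, where (x)_m denotes the rising factorial (Pochhammer symbol). -/

import Mathlib

open Finset

noncomputable def poch (x : ℂ) (m : ℕ) : ℂ := ∏ j ∈ Finset.range m, (x + (j : ℂ))

noncomputable def qpoch (x q : ℂ) (m : ℕ) : ℂ := ∏ i ∈ Finset.range m, (1 - x * q ^ i)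

lemma poch_zero (x : ℂ) : poch x 0 = 1 := Finset.prod_range_zero _
lemma poch_one (x : ℂ) : poch x 1 = x := by simp [poch]
lemma poch_two (x : ℂ) : poch x 2 = x * (x+1) := by
  norm_num [poch, Finset.prod_range_succ]
lemma poch_succ (x : ℂ) (k : ℕ) : poch x (k+1) = poch x k * (x + k) := Finset.prod_range_succ _ _
lemma poch_add (x : ℂ) (s t : ℕ) : poch x (s + t) = poch x s * poch (x + (s:ℂ)) t := by
  unfold poch; rw [Finset.prod_range_add]; congr 1
  exact Finset.prod_congr rfl (fun i _ => by push_cast; ring)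
lemma poch_shift3 (x : ℂ) (k : ℕ) :
    poch x 3 * poch (x + 3) k = poch x k * poch (x + (k:ℂ)) 3 := by
  have h1 := poch_add x 3 k; have h2 := poch_add x k 3
  rw [Nat.add_comm 3 k] at h1
  have := h1.symm.trans h2; push_cast at this; exact this
lemma poch_three (x : ℂ) : poch x 3 = x * (x+1) * (x+2) := by
  norm_num [poch, Finset.prod_range_succ]
lemma poch_ne_zero_of_le {x : ℂ} {s t : ℕ} (h : s ≤ t) (ht : poch x t ≠ 0) :
    poch x s ≠ 0 := by
  obtain ⟨d, rfl⟩ := Nat.exists_eq_add_of_le h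
  rw [poch_add] at ht
  exact left_ne_zero_of_mul ht
lemma poch_factor_ne_zero {x : ℂ} {t : ℕ} (ht : poch x t ≠ 0) {j : ℕ} (hj : j < t) :
    x + (j:ℂ) ≠ 0 := fun h => ht (Finset.prod_eq_zero (Finset.mem_range.2 hj) h)
lemma poch_neg_nat_zero {n k : ℕ} (h : n < k) : poch (-(n:ℂ)) k = 0 :=
  Finset.prod_eq_zero (Finset.mem_range.2 h) (by simp)

noncomputable def trm (a : ℂ) (n k : ℕ) : ℂ :=
  poch (-(n:ℂ)) k * poch a k * poch (3*a + (n:ℂ)) k * (3/4)^k /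
    ((Nat.factorial k : ℂ) * poch (3*a/2) k * poch ((1+3*a)/2) k)

lemma trm_def (a : ℂ) (n k : ℕ) : trm a n k =
  poch (-(n:ℂ)) k * poch a k * poch (3*a + (n:ℂ)) k * (3/4)^k /
    ((Nat.factorial k : ℂ) * poch (3*a/2) k * poch ((1+3*a)/2) k) := rfl

noncomputable def gg (a : ℂ) (m k : ℕ) : ℂ :=
  (3*a+2*(m:ℂ)+3) * (k:ℂ) * (2*(k:ℂ)+3*a-2) * (2*(k:ℂ)+3*a-1) *
    poch (-(m:ℂ)-3) k * poch a k * poch (3*a+(m:ℂ)) k * (3/4)^k /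
    ((3*a+(m:ℂ)) * ((m:ℂ)+3) * (Nat.factorial k : ℂ) * poch (3*a/2) k * poch ((1+3*a)/2) k)

lemma LIn (a : ℂ) (m : ℕ)
    (hd1 : poch (3*a/2) (m+3) ≠ 0) (hd2 : poch ((1+3*a)/2) (m+3) ≠ 0)
    (hA : 3*a + (m:ℂ) ≠ 0) (hA1 : 3*a + (m:ℂ) + 1 ≠ 0) (hA2 : 3*a + (m:ℂ) + 2 ≠ 0) :
    (3*a+(m:ℂ)+1)*(3*a+(m:ℂ)+2) * trm a (m+3) (m+3) = gg a m (m+3) := by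
  have hm3 : (m:ℂ) + 3 ≠ 0 := by
    have : ((m+3 : ℕ) : ℂ) ≠ 0 := Nat.cast_ne_zero.2 (by omega)
    push_cast at this; exact this
  have hf : ((Nat.factorial (m+3) : ℕ) : ℂ) ≠ 0 := Nat.cast_ne_zero.2 (Nat.factorial_ne_zero _)
  have E2 := poch_shift3 (3*a+(m:ℂ)) (m+3)
  rw [show (3*a+(m:ℂ)) + 3 = 3*a+((m:ℂ)+3) by ring] at E2
  rw [poch_three, poch_three] at E2
  have hQ : poch (3*a+((m:ℂ)+3)) (m+3) = poch (3*a+(m:ℂ)) (m+3) *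
      ((3*a+(m:ℂ)+((m:ℕ):ℂ)+3) * (3*a+(m:ℂ)+((m:ℕ):ℂ)+3+1) * (3*a+(m:ℂ)+((m:ℕ):ℂ)+3+2)) /
      ((3*a+(m:ℂ)) * (3*a+(m:ℂ)+1) * (3*a+(m:ℂ)+2)) := by
    rw [eq_div_iff (mul_ne_zero (mul_ne_zero hA hA1) hA2)]
    push_cast at E2 ⊢
    linear_combination E2
  unfold trm gg
  push_cast
  rw [show -((m:ℂ)+3) = -(m:ℂ)-3 by ring]
  rw [hQ]
  generalize poch (-(m:ℂ)-3) (m+3) = A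
  generalize poch a (m+3) = B
  generalize poch (3*a+(m:ℂ)) (m+3) = C
  generalize hD1 : poch (3*a/2) (m+3) = D1 at hd1
  generalize hD2 : poch ((1+3*a)/2) (m+3) = D2 at hd2
  generalize hFF : ((Nat.factorial (m+3) : ℕ) : ℂ) = f at hf
  generalize ((3:ℂ)/4)^(m+3) = p
  simp only [div_mul_eq_mul_div, mul_div_assoc', div_div]
  rw [div_eq_div_iff
    (mul_ne_zero (mul_ne_zero (mul_ne_zero hA hA1) hA2)
      (mul_ne_zero (mul_ne_zero hf hd1) hd2))
    (mul_ne_zero (mul_ne_zero (mul_ne_zero (mul_ne_zero hA hm3) hf) hd1) hd2)]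
  ring

set_option maxHeartbeats 2000000 in
lemma LI (a : ℂ) (m k : ℕ)
    (hd1 : poch (3*a/2) (k+1) ≠ 0) (hd2 : poch ((1+3*a)/2) (k+1) ≠ 0)
    (hA : 3*a + (m:ℂ) ≠ 0) (hA1 : 3*a + (m:ℂ) + 1 ≠ 0) (hA2 : 3*a + (m:ℂ) + 2 ≠ 0) :
    ((m:ℂ)+1)*((m:ℂ)+2) * trm a m k - (3*a+(m:ℂ)+1)*(3*a+(m:ℂ)+2) * trm a (m+3) k
      = gg a m (k+1) - gg a m k := by
  have hm3 : (m:ℂ) + 3 ≠ 0 := by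
    have : ((m+3 : ℕ) : ℂ) ≠ 0 := Nat.cast_ne_zero.2 (by omega)
    push_cast at this; exact this
  have hm1 : (m:ℂ) + 1 ≠ 0 := by
    have : ((m+1 : ℕ) : ℂ) ≠ 0 := Nat.cast_ne_zero.2 (by omega)
    push_cast at this; exact this
  have hm2 : (m:ℂ) + 2 ≠ 0 := by
    have : ((m+2 : ℕ) : ℂ) ≠ 0 := Nat.cast_ne_zero.2 (by omega)
    push_cast at this; exact this
  have hk1 : (k:ℂ) + 1 ≠ 0 := by
    have : ((k+1 : ℕ) : ℂ) ≠ 0 := Nat.cast_ne_zero.2 (by omega)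
    push_cast at this; exact this
  have hf : ((Nat.factorial k : ℕ) : ℂ) ≠ 0 := Nat.cast_ne_zero.2 (Nat.factorial_ne_zero k)
  have hd1' : poch (3*a/2) k ≠ 0 := fun h => hd1 (by rw [poch_succ, h, zero_mul])
  have hd2' : poch ((1+3*a)/2) k ≠ 0 := fun h => hd2 (by rw [poch_succ, h, zero_mul])
  have he1 : 3*a/2 + (k:ℂ) ≠ 0 := poch_factor_ne_zero hd1 (Nat.lt_succ_self k)
  have he2 : (1+3*a)/2 + (k:ℂ) ≠ 0 := poch_factor_ne_zero hd2 (Nat.lt_succ_self k)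
  -- shift relations
  have E1 := poch_shift3 (-(m:ℂ)-3) k
  rw [show (-(m:ℂ)-3) + 3 = -(m:ℂ) by ring] at E1
  have E2 := poch_shift3 (3*a+(m:ℂ)) k
  rw [show (3*a+(m:ℂ)) + 3 = 3*a+((m:ℂ)+3) by ring] at E2
  rw [poch_three, poch_three] at E1 E2
  have hP : poch (-(m:ℂ)) k = -(poch (-(m:ℂ)-3) k *
      (((k:ℂ)-m-3) * ((k:ℂ)-m-2) * ((k:ℂ)-m-1))) /
      (((m:ℂ)+1) * ((m:ℂ)+2) * ((m:ℂ)+3)) := by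
    rw [eq_div_iff (by exact mul_ne_zero (mul_ne_zero hm1 hm2) hm3)]
    linear_combination (-1 : ℂ) * E1
  have hQ : poch (3*a+((m:ℂ)+3)) k = poch (3*a+(m:ℂ)) k *
      ((3*a+(m:ℂ)+k) * (3*a+(m:ℂ)+k+1) * (3*a+(m:ℂ)+k+2)) /
      ((3*a+(m:ℂ)) * (3*a+(m:ℂ)+1) * (3*a+(m:ℂ)+2)) := by
    rw [eq_div_iff (by exact mul_ne_zero (mul_ne_zero hA hA1) hA2)]
    linear_combination E2
  unfold trm gg
  push_cast
  rw [show -((m:ℂ)+3) = -(m:ℂ)-3 by ring]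
  rw [poch_succ (-(m:ℂ)-3), poch_succ a, poch_succ (3*a+(m:ℂ)), poch_succ (3*a/2),
    poch_succ ((1+3*a)/2), Nat.factorial_succ, pow_succ]
  push_cast
  generalize poch (-(m:ℂ)-3) k = A at hP ⊢
  generalize poch a k = B
  generalize poch (3*a+(m:ℂ)) k = C at hQ ⊢
  generalize poch (-(m:ℂ)) k = P at hP ⊢
  generalize poch (3*a+((m:ℂ)+3)) k = Q at hQ ⊢
  generalize poch (3*a/2) k = D1 at hd1' ⊢
  generalize poch ((1+3*a)/2) k = D2 at hd2' ⊢
  generalize hFF : ((Nat.factorial k : ℕ) : ℂ) = f at hf ⊢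
  generalize ((3:ℂ)/4)^k = p
  rw [hP, hQ]
  simp only [div_mul_eq_mul_div, mul_div_assoc', div_div]
  have hfdd : f * D1 * D2 ≠ 0 := mul_ne_zero (mul_ne_zero hf hd1') hd2'
  rw [div_sub_div _ _ (mul_ne_zero (mul_ne_zero (mul_ne_zero hm1 hm2) hm3) hfdd)
      (mul_ne_zero (mul_ne_zero (mul_ne_zero hA hA1) hA2) hfdd),
    div_sub_div _ _ (mul_ne_zero (by norm_num : (4:ℂ) ≠ 0)
      (mul_ne_zero (mul_ne_zero (mul_ne_zero (mul_ne_zero hA hm3) (mul_ne_zero hk1 hf))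
        (mul_ne_zero hd1' he1)) (mul_ne_zero hd2' he2)))
      (mul_ne_zero (mul_ne_zero (mul_ne_zero (mul_ne_zero hA hm3) hf) hd1') hd2'),
    div_eq_div_iff (mul_ne_zero (mul_ne_zero (mul_ne_zero (mul_ne_zero hm1 hm2) hm3) hfdd) (mul_ne_zero (mul_ne_zero (mul_ne_zero hA hA1) hA2) hfdd)) (mul_ne_zero (mul_ne_zero (by norm_num : (4:ℂ) ≠ 0)
      (mul_ne_zero (mul_ne_zero (mul_ne_zero (mul_ne_zero hA hm3) (mul_ne_zero hk1 hf))
        (mul_ne_zero hd1' he1)) (mul_ne_zero hd2' he2))) (mul_ne_zero (mul_ne_zero (mul_ne_zero (mul_ne_zero hA hm3) hf) hd1') hd2'))]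
  ring

set_option maxHeartbeats 1000000 in
theorem key : ∀ n : ℕ, ∀ a : ℂ,
    (∀ k ≤ n, poch (3*a/2) k ≠ 0 ∧ poch ((1+3*a)/2) k ≠ 0) →
    (poch (1/3 + a) (n/3) ≠ 0 ∧ poch (2/3 + a) (n/3) ≠ 0) →
    ∑ k ∈ Finset.range (n+1), trm a n k
    = if 3 ∣ n then
        poch (1/3) (n/3) * poch (2/3) (n/3) / (poch (1/3 + a) (n/3) * poch (2/3 + a) (n/3))
      else 0 := by
  intro n
  induction n using Nat.strong_induction_on with
  | _ n IH =>
  rcases n with _|_|_|m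
  · -- n = 0
    intro a _ _
    norm_num [trm, poch_zero, Finset.sum_range_one]
  · -- n = 1
    intro a hden _
    have h1 : poch (3*a/2) 1 ≠ 0 := (hden 1 le_rfl).1
    have h2 : poch ((1+3*a)/2) 1 ≠ 0 := (hden 1 le_rfl).2
    rw [poch_one] at h1 h2
    have ha : a ≠ 0 := fun h => h1 (by rw [h]; ring)
    have hb : 1+3*a ≠ 0 := fun h => h2 (by rw [show (1+3*a)/2 = (1+3*a)*(1/2) by ring, h, zero_mul])
    rw [if_neg (by omega)]
    rw [Finset.sum_range_succ, Finset.sum_range_one]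
    simp only [trm, poch_zero, poch_one]
    push_cast
    have hb' : 1 + a*3 ≠ 0 := by rwa [mul_comm]
    field_simp
    ring
  · -- n = 2
    intro a hden _
    have h1 : poch (3*a/2) 2 ≠ 0 := (hden 2 le_rfl).1
    have h2 : poch ((1+3*a)/2) 2 ≠ 0 := (hden 2 le_rfl).2
    rw [poch_two] at h1 h2
    have c0 : 3*a/2 ≠ 0 := left_ne_zero_of_mul h1
    have c1 : 3*a/2 + 1 ≠ 0 := right_ne_zero_of_mul h1
    have c2 : (1+3*a)/2 ≠ 0 := left_ne_zero_of_mul h2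
    have c3 : (1+3*a)/2 + 1 ≠ 0 := right_ne_zero_of_mul h2
    have ha : a ≠ 0 := fun h => c0 (by rw [h]; ring)
    have hb : 1+3*a ≠ 0 := fun h => c2 (by rw [show (1+3*a)/2 = (1+3*a)*(1/2) by ring, h, zero_mul])
    have hc : 3*a+2 ≠ 0 := fun h => c1 (by linear_combination h/2)
    have he : 1+a ≠ 0 := fun h => c3 (by linear_combination (3/2 : ℂ)*h)
    rw [if_neg (by omega)]
    rw [Finset.sum_range_succ, Finset.sum_range_succ, Finset.sum_range_one]
    simp only [trm, poch_zero, poch_one, poch_two]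
    push_cast
    simp only [div_mul_eq_mul_div, mul_div_assoc', div_div]
    have h3an : (3*a : ℂ) ≠ 0 := by
      intro h; exact ha (by linear_combination h/3)
    have n0 : ((Nat.factorial 0 : ℂ) * 1 * 1) ≠ 0 := by norm_num
    have n1 : ((Nat.factorial 1 : ℂ) * (3 * a) * (1 + 3 * a) / (2 * 2)) ≠ 0 := by
      apply div_ne_zero _ (by norm_num)
      exact mul_ne_zero (mul_ne_zero (by norm_num) h3an) hb
    have n2 : ((Nat.factorial 2 : ℂ) * (3 * a * (3 * a / 2 + 1)) * ((1 + 3 * a) * ((1 + 3 * a) / 2 + 1)) / (2 * 2)) ≠ 0 := by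
      apply div_ne_zero _ (by norm_num)
      exact mul_ne_zero (mul_ne_zero (by norm_num) (mul_ne_zero h3an c1)) (mul_ne_zero hb c3)
    rw [div_add_div _ _ n0 n1, div_add_div _ _ (mul_ne_zero n0 n1) n2, div_eq_zero_iff]
    exact Or.inl (by norm_num [Nat.factorial]; ring)
  · -- n = m + 3
    intro a hden hrhs
    have hden' : ∀ k ≤ m+3, poch (3*a/2) k ≠ 0 ∧ poch ((1+3*a)/2) k ≠ 0 := hden
    have hrhs' : poch (1/3 + a) ((m+3)/3) ≠ 0 ∧ poch (2/3 + a) ((m+3)/3) ≠ 0 := hrhs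
    show ∑ k ∈ Finset.range ((m+3)+1), trm a (m+3) k
      = if 3 ∣ (m+3) then
          poch (1/3) ((m+3)/3) * poch (2/3) ((m+3)/3) /
            (poch (1/3 + a) ((m+3)/3) * poch (2/3 + a) ((m+3)/3))
        else 0
    have hd1n : poch (3*a/2) (m+3) ≠ 0 := (hden' (m+3) le_rfl).1
    have hd2n : poch ((1+3*a)/2) (m+3) ≠ 0 := (hden' (m+3) le_rfl).2
    have h3a : ∀ t : ℕ, t < 2*(m+3) → 3*a + (t:ℂ) ≠ 0 := by
      intro t ht h0
      rcases Nat.even_or_odd t with ⟨j,hj⟩|⟨j,hj⟩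
      · exact poch_factor_ne_zero hd1n (show j < m+3 by omega)
          (by subst hj; push_cast at h0 ⊢; linear_combination h0/2)
      · exact poch_factor_ne_zero hd2n (show j < m+3 by omega)
          (by subst hj; push_cast at h0 ⊢; linear_combination h0/2)
    have hA : 3*a + (m:ℂ) ≠ 0 := h3a m (by omega)
    have hA1 : 3*a + (m:ℂ) + 1 ≠ 0 :=
      fun h => h3a (m+1) (by omega) (by push_cast; linear_combination h)
    have hA2 : 3*a + (m:ℂ) + 2 ≠ 0 :=
      fun h => h3a (m+2) (by omega) (by push_cast; linear_combination h)
    have htel : ∑ k ∈ Finset.range (m+3),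
        (((m:ℂ)+1)*((m:ℂ)+2) * trm a m k - (3*a+(m:ℂ)+1)*(3*a+(m:ℂ)+2) * trm a (m+3) k)
        = gg a m (m+3) - gg a m 0 := by
      rw [← Finset.sum_range_sub (gg a m)]
      refine Finset.sum_congr rfl (fun k hk => ?_)
      have hk' : k+1 ≤ m+3 := Finset.mem_range.1 hk
      exact LI a m k (hden' (k+1) hk').1 (hden' (k+1) hk').2 hA hA1 hA2
    have hg0 : gg a m 0 = 0 := by simp [gg]
    have hLn : (3*a+(m:ℂ)+1)*(3*a+(m:ℂ)+2) * trm a (m+3) (m+3) = gg a m (m+3) :=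
      LIn a m hd1n hd2n hA hA1 hA2
    have hz1 : trm a m (m+1) = 0 := by
      unfold trm; rw [poch_neg_nat_zero (show m < m+1 by omega)]; simp
    have hz2 : trm a m (m+2) = 0 := by
      unfold trm; rw [poch_neg_nat_zero (show m < m+2 by omega)]; simp
    have hsum3 : ∑ k ∈ Finset.range (m+3), trm a m k = ∑ k ∈ Finset.range (m+1), trm a m k := by
      rw [Finset.sum_range_succ, Finset.sum_range_succ, hz1, hz2, add_zero, add_zero]
    rw [Finset.sum_sub_distrib, ← Finset.mul_sum, ← Finset.mul_sum, hsum3, hg0, sub_zero] at htel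
    have hkey : (3*a+(m:ℂ)+1)*(3*a+(m:ℂ)+2) * (∑ k ∈ Finset.range ((m+3)+1), trm a (m+3) k)
        = ((m:ℂ)+1)*((m:ℂ)+2) * (∑ k ∈ Finset.range (m+1), trm a m k) := by
      rw [Finset.sum_range_succ, mul_add, hLn]
      linear_combination -htel
    have hdenm : ∀ k ≤ m, poch (3*a/2) k ≠ 0 ∧ poch ((1+3*a)/2) k ≠ 0 :=
      fun k hk => hden' k (by omega)
    have hdiv3 : (m+3)/3 = m/3 + 1 := by omega
    have hrm : poch (1/3 + a) (m/3) ≠ 0 ∧ poch (2/3 + a) (m/3) ≠ 0 := by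
      constructor
      · exact poch_ne_zero_of_le (by omega) hrhs'.1
      · exact poch_ne_zero_of_le (by omega) hrhs'.2
    have hSm := IH m (by omega) a hdenm hrm
    have hc12 : (3*a+(m:ℂ)+1)*(3*a+(m:ℂ)+2) ≠ 0 := mul_ne_zero hA1 hA2
    by_cases h3 : 3 ∣ (m+3)
    · have h3m : 3 ∣ m := by omega
      rw [if_pos h3m] at hSm
      rw [if_pos h3]
      obtain ⟨t, ht⟩ := h3m
      have hdiv : m/3 = t := by omega
      have hdiv' : (m+3)/3 = t+1 := by omega
      have htm : (m:ℂ) = 3*(t:ℂ) := by rw [ht]; push_cast; ring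
      rw [hdiv] at hSm
      rw [hdiv']
      have hq1 : poch (1/3+a) (t+1) ≠ 0 := by rw [← hdiv']; exact hrhs'.1
      have hq2 : poch (2/3+a) (t+1) ≠ 0 := by rw [← hdiv']; exact hrhs'.2
      have hq1' : poch (1/3+a) t ≠ 0 := fun h => hq1 (by rw [poch_succ, h, zero_mul])
      have hq2' : poch (2/3+a) t ≠ 0 := fun h => hq2 (by rw [poch_succ, h, zero_mul])
      have hq1f : 1/3+a+(t:ℂ) ≠ 0 := poch_factor_ne_zero hq1 (by omega)
      have hq2f : 2/3+a+(t:ℂ) ≠ 0 := poch_factor_ne_zero hq2 (by omega)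
      have hS : ∑ k ∈ Finset.range ((m+3)+1), trm a (m+3) k
          = ((m:ℂ)+1)*((m:ℂ)+2) * (poch (1/3) t * poch (2/3) t /
              (poch (1/3+a) t * poch (2/3+a) t)) / ((3*a+(m:ℂ)+1)*(3*a+(m:ℂ)+2)) := by
        rw [eq_div_iff hc12]
        rw [hSm] at hkey
        linear_combination hkey
      rw [hS, htm, poch_succ (1/3), poch_succ (2/3), poch_succ (1/3+a), poch_succ (2/3+a)]
      rw [htm] at hA1 hA2
      have h1' : 3*a+3*(t:ℂ)+1 ≠ 0 := hA1
      have h2' : 3*a+3*(t:ℂ)+2 ≠ 0 := hA2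
      field_simp
      ring
    · have h3m : ¬ 3 ∣ m := by omega
      rw [if_neg h3m] at hSm
      rw [if_neg h3]
      rw [hSm, mul_zero] at hkey
      exact (mul_eq_zero.1 hkey).resolve_left hc12


theorem stmt0 (n : ℕ) (a : ℂ)
    (hden : ∀ k ≤ n, poch (3*a/2) k ≠ 0 ∧ poch ((1+3*a)/2) k ≠ 0)
    (hrhs : poch (1/3 + a) (n/3) ≠ 0 ∧ poch (2/3 + a) (n/3) ≠ 0) :
    ∑ k ∈ Finset.range (n+1),
      poch (-(n:ℂ)) k * poch a k * poch (3*a + (n:ℂ)) k * (3/4)^k /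
        ((Nat.factorial k : ℂ) * poch (3*a/2) k * poch ((1+3*a)/2) k)
    = if 3 ∣ n then
        poch (1/3) (n/3) * poch (2/3) (n/3) / (poch (1/3 + a) (n/3) * poch (2/3 + a) (n/3))
      else 0 := by exact key n a hden hrhs
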